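/- Let α ∈ (0, 1/2), T > 0 and let z : [0,T] → ℝ be (1−α)-Hölder continuous with z₀ ≥ 0. Define y_t = max_{s ∈ [0,t]} (z_s)⁻ and x_t = z_t + y_t. Then x is (1−α)-Hölder continuous and ‖x‖_{1−α,[0,T]} ≤ 2 ‖z‖_{1−α,[0,T]}, where ‖f‖_{1−α,[0,T]} = sup_{t ∈ [0,T]} |f(t)| + sup_{0 ≤ s < t ≤ T} |f(t) − f(s)| / (t − s)^{1−α}. -/

import Mathlib

open MeasureTheory Set Filter Topology

noncomputable section

/-- `f` is `γ`-Hölder continuous on `[a,b]`. -/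
def HolderOnIcc (γ a b : ℝ) (f : ℝ → ℝ) : Prop :=
  ∃ C : ℝ, 0 ≤ C ∧ ∀ s ∈ Set.Icc a b, ∀ t ∈ Set.Icc a b, |f t - f s| ≤ C * |t - s| ^ γ

/-- The `γ`-Hölder norm of `f` on `[0,T]`:
`sup_{t} |f t| + sup_{s < t} |f t - f s| / (t - s) ^ γ`. -/
def holderNorm (γ T : ℝ) (f : ℝ → ℝ) : ℝ :=
  sSup ((fun t => |f t|) '' Set.Icc 0 T) +
    sSup {r : ℝ | ∃ s t : ℝ, 0 ≤ s ∧ s < t ∧ t ≤ T ∧ r = |f t - f s| / (t - s) ^ γ}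

private lemma max_neg_le_abs (a : ℝ) : max 0 (-a) ≤ |a| :=
  max_le (abs_nonneg a) (neg_le_abs a)
private lemma lip_neg_part (a b : ℝ) : |max 0 (-a) - max 0 (-b)| ≤ |a - b| := by
  have h := abs_max_sub_max_le_abs (-a) (-b) 0
  calc |max 0 (-a) - max 0 (-b)| = |max (-a) 0 - max (-b) 0| := by rw [max_comm, max_comm (-b)]
    _ ≤ |(-a) - (-b)| := h
    _ = |a - b| := by rw [neg_sub_neg, abs_sub_comm]
private lemma y_bounds (γ T : ℝ) (hγ : 0 < γ) (z : ℝ → ℝ) (C : ℝ) (hC : 0 ≤ C)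
    (hzC : ∀ s ∈ Set.Icc 0 T, ∀ t ∈ Set.Icc 0 T, |z t - z s| ≤ C * |t - s| ^ γ)
    (y : ℝ → ℝ)
    (hy : ∀ t : ℝ, y t = sSup ((fun s => max 0 (-z s)) '' Set.Icc 0 t))
    {s t : ℝ} (hs : s ∈ Set.Icc 0 T) (ht : t ∈ Set.Icc 0 T) (hst : s ≤ t) :
    y s ≤ y t ∧ y t - y s ≤ C * (t - s) ^ γ := by
  set g : ℝ → ℝ := fun u => max 0 (-z u) with hg
  set B : ℝ := |z 0| + C * T ^ γ with hB
  have h0T : (0:ℝ) ∈ Set.Icc (0:ℝ) T := ⟨le_refl 0, le_trans hs.1 (le_trans hst ht.2)⟩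
  have hgB : ∀ u ∈ Set.Icc (0:ℝ) T, g u ≤ B := by
    intro u hu
    have h1 : g u ≤ |z u| := max_neg_le_abs _
    have h2 : |z u| ≤ |z 0| + |z u - z 0| := by
      have := abs_sub_abs_le_abs_sub (z u) (z 0); linarith [abs_nonneg (z u - z 0)]
    have h3 : |z u - z 0| ≤ C * |u - 0| ^ γ := hzC 0 h0T u hu
    have h4 : |u - 0| ^ γ ≤ T ^ γ := by
      rw [sub_zero, abs_of_nonneg hu.1]
      exact Real.rpow_le_rpow hu.1 hu.2 hγ.le
    have h5 : C * |u - 0| ^ γ ≤ C * T ^ γ := mul_le_mul_of_nonneg_left h4 hC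
    linarith
  have hbdd : ∀ r : ℝ, r ≤ T → BddAbove (g '' Set.Icc 0 r) := by
    intro r hr
    refine ⟨B, ?_⟩
    rintro b ⟨u, hu, rfl⟩
    exact hgB u ⟨hu.1, hu.2.trans hr⟩
  have hne : ∀ r : ℝ, 0 ≤ r → (g '' Set.Icc 0 r).Nonempty :=
    fun r hr => ⟨g 0, 0, ⟨le_refl 0, hr⟩, rfl⟩
  have hmono : y s ≤ y t := by
    rw [hy s, hy t]
    exact csSup_le_csSup (hbdd t ht.2) (hne s hs.1)
      (Set.image_mono (Set.Icc_subset_Icc (le_refl 0) hst))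
  refine ⟨hmono, ?_⟩
  have key : y t ≤ y s + C * (t - s) ^ γ := by
    rw [hy t]
    apply csSup_le (hne t (le_trans hs.1 hst))
    rintro b ⟨u, hu, rfl⟩
    rcases le_or_gt u s with hus | hsu
    · have : g u ≤ y s := by
        rw [hy s]
        exact le_csSup (hbdd s hs.2) ⟨u, ⟨hu.1, hus⟩, rfl⟩
      have hpow : 0 ≤ C * (t - s) ^ γ :=
        mul_nonneg hC (Real.rpow_nonneg (by linarith) _)
      linarith
    · have hgsys : g s ≤ y s := by
        rw [hy s]
        exact le_csSup (hbdd s hs.2) ⟨s, ⟨hs.1, le_refl s⟩, rfl⟩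
      have huT : u ∈ Set.Icc (0:ℝ) T := ⟨hu.1, hu.2.trans ht.2⟩
      have h1 : |g u - g s| ≤ |z u - z s| := lip_neg_part _ _
      have h2 : |z u - z s| ≤ C * |u - s| ^ γ := hzC s hs u huT
      have h3 : |u - s| ^ γ ≤ (t - s) ^ γ := by
        rw [abs_of_nonneg (by linarith)]
        exact Real.rpow_le_rpow (by linarith) (by linarith [hu.2]) hγ.le
      have h4 : g u - g s ≤ |g u - g s| := le_abs_self _
      have h5 : C * |u - s| ^ γ ≤ C * (t - s) ^ γ := mul_le_mul_of_nonneg_left h3 hC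
      linarith
  linarith


/-- The Skorokhod map preserves `(1-α)`-Hölder continuity, with
`‖x‖_{1-α} ≤ 2 ‖z‖_{1-α}`. -/
theorem skorokhod_holder_bound
    (α T : ℝ) (hα : α ∈ Set.Ioo (0 : ℝ) (1 / 2)) (hT : 0 < T)
    (z : ℝ → ℝ) (hz : HolderOnIcc (1 - α) 0 T z) (hz0 : 0 ≤ z 0)
    (y x : ℝ → ℝ)
    (hy : ∀ t : ℝ, y t = sSup ((fun s => max 0 (-z s)) '' Set.Icc 0 t))
    (hx : ∀ t : ℝ, x t = z t + y t) :
    HolderOnIcc (1 - α) 0 T x ∧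
    holderNorm (1 - α) T x ≤ 2 * holderNorm (1 - α) T z := by
  obtain ⟨C, hC, hzC⟩ := hz
  obtain ⟨hα0, hα2⟩ := hα
  have hγ : 0 < 1 - α := by linarith
  -- generic increment bound for x
  have main : ∀ C' : ℝ, 0 ≤ C' →
      (∀ s ∈ Set.Icc (0:ℝ) T, ∀ t ∈ Set.Icc (0:ℝ) T, |z t - z s| ≤ C' * |t - s| ^ (1-α)) →
      ∀ s ∈ Set.Icc (0:ℝ) T, ∀ t ∈ Set.Icc (0:ℝ) T, |x t - x s| ≤ 2 * C' * |t - s| ^ (1-α) := by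
    intro C' hC' hzC'
    have half : ∀ s ∈ Set.Icc (0:ℝ) T, ∀ t ∈ Set.Icc (0:ℝ) T, s ≤ t →
        |x t - x s| ≤ 2 * C' * |t - s| ^ (1-α) := by
      intro s hsm t htm hst
      obtain ⟨hmono, hincr⟩ := y_bounds (1-α) T hγ z C' hC' hzC' y hy hsm htm hst
      have hz2 : |z t - z s| ≤ C' * |t - s| ^ (1-α) := hzC' s hsm t htm
      have habs : |t - s| = t - s := abs_of_nonneg (by linarith)
      have hy2 : |y t - y s| ≤ C' * (t - s) ^ (1-α) := by
        rw [abs_of_nonneg (by linarith)]; exact hincr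
      have htri : |x t - x s| ≤ |z t - z s| + |y t - y s| := by
        rw [hx t, hx s]
        calc |z t + y t - (z s + y s)| = |(z t - z s) + (y t - y s)| := by ring_nf
          _ ≤ |z t - z s| + |y t - y s| := abs_add_le _ _
      rw [habs] at hz2 ⊢
      linarith
    intro s hsm t htm
    rcases le_total s t with hst | hst
    · exact half s hsm t htm hst
    · have := half t htm s hsm hst
      rw [abs_sub_comm (x s) (x t), abs_sub_comm s t] at this
      exact this
  constructor
  · exact ⟨2 * C, by linarith, main C hC hzC⟩
  -- norm bound
  set M : ℝ := sSup ((fun t => |z t|) '' Set.Icc 0 T) with hM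
  set Sz : Set ℝ := {r : ℝ | ∃ s t : ℝ, 0 ≤ s ∧ s < t ∧ t ≤ T ∧ r = |z t - z s| / (t - s) ^ (1-α)} with hSz
  set R : ℝ := sSup Sz with hR
  have h0T : (0:ℝ) ∈ Set.Icc (0:ℝ) T := ⟨le_refl 0, hT.le⟩
  have hTT : T ∈ Set.Icc (0:ℝ) T := ⟨hT.le, le_refl T⟩
  have hMbdd : BddAbove ((fun t => |z t|) '' Set.Icc 0 T) := by
    refine ⟨|z 0| + C * T ^ (1-α), ?_⟩
    rintro b ⟨u, hu, rfl⟩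
    have h3 : |z u - z 0| ≤ C * |u - 0| ^ (1-α) := hzC 0 h0T u hu
    have h4 : |u - 0| ^ (1-α) ≤ T ^ (1-α) := by
      rw [sub_zero, abs_of_nonneg hu.1]
      exact Real.rpow_le_rpow hu.1 hu.2 hγ.le
    have h5 : C * |u - 0| ^ (1-α) ≤ C * T ^ (1-α) := mul_le_mul_of_nonneg_left h4 hC
    have := abs_sub_abs_le_abs_sub (z u) (z 0)
    simp only []
    linarith
  have hMub : ∀ t ∈ Set.Icc (0:ℝ) T, |z t| ≤ M := fun t ht => le_csSup hMbdd ⟨t, ht, rfl⟩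
  have hM0 : 0 ≤ M := le_trans (abs_nonneg (z 0)) (hMub 0 h0T)
  have hSzbdd : BddAbove Sz := by
    refine ⟨C, ?_⟩
    rintro r ⟨s, t, hs0, hst, htT, rfl⟩
    have hpos : (0:ℝ) < (t - s) ^ (1-α) := Real.rpow_pos_of_pos (by linarith) _
    rw [div_le_iff₀ hpos]
    have := hzC s ⟨hs0, by linarith⟩ t ⟨by linarith, htT⟩
    rwa [abs_of_nonneg (by linarith : (0:ℝ) ≤ t - s)] at this
  have hSzmem : |z T - z 0| / (T - 0) ^ (1-α) ∈ Sz := ⟨0, T, le_refl 0, hT, le_refl T, rfl⟩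
  have hR0 : 0 ≤ R := le_trans (div_nonneg (abs_nonneg _) (Real.rpow_nonneg (by linarith) _))
    (le_csSup hSzbdd hSzmem)
  have hRub : ∀ r ∈ Sz, r ≤ R := fun r hr => le_csSup hSzbdd hr
  have hzR : ∀ s ∈ Set.Icc (0:ℝ) T, ∀ t ∈ Set.Icc (0:ℝ) T, |z t - z s| ≤ R * |t - s| ^ (1-α) := by
    have half : ∀ s ∈ Set.Icc (0:ℝ) T, ∀ t ∈ Set.Icc (0:ℝ) T, s ≤ t →
        |z t - z s| ≤ R * |t - s| ^ (1-α) := by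
      intro s hsm t htm hst
      rcases eq_or_lt_of_le hst with rfl | hlt
      · simp [Real.zero_rpow (by linarith : (1:ℝ) - α ≠ 0)]
      · have hmem : |z t - z s| / (t - s) ^ (1-α) ∈ Sz := ⟨s, t, hsm.1, hlt, htm.2, rfl⟩
        have hpos : (0:ℝ) < (t - s) ^ (1-α) := Real.rpow_pos_of_pos (by linarith) _
        have := hRub _ hmem
        rw [div_le_iff₀ hpos] at this
        rwa [abs_of_nonneg (by linarith : (0:ℝ) ≤ t - s)]
    intro s hsm t htm
    rcases le_total s t with hst | hst
    · exact half s hsm t htm hst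
    · have := half t htm s hsm hst
      rw [abs_sub_comm (z s) (z t), abs_sub_comm s t] at this
      exact this
  -- sup |x| ≤ 2M
  have hybdd : ∀ t ∈ Set.Icc (0:ℝ) T, BddAbove ((fun s => max 0 (-z s)) '' Set.Icc 0 t) := by
    intro t ht
    refine ⟨M, ?_⟩
    rintro b ⟨u, hu, rfl⟩
    exact le_trans (max_neg_le_abs _) (hMub u ⟨hu.1, hu.2.trans ht.2⟩)
  have hyub : ∀ t ∈ Set.Icc (0:ℝ) T, y t ≤ M := by
    intro t ht
    rw [hy t]
    have hne : ((fun s => max 0 (-z s)) '' Set.Icc 0 t).Nonempty :=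
      ⟨max 0 (-z 0), Set.mem_image_of_mem _ (⟨le_refl 0, ht.1⟩ : (0:ℝ) ∈ Set.Icc 0 t)⟩
    apply csSup_le hne
    rintro b ⟨u, hu, rfl⟩
    exact le_trans (max_neg_le_abs _) (hMub u ⟨hu.1, hu.2.trans ht.2⟩)
  have hy0 : ∀ t ∈ Set.Icc (0:ℝ) T, 0 ≤ y t := by
    intro t ht
    rw [hy t]
    exact le_trans (le_max_left 0 (-z t)) (le_csSup (hybdd t ht) ⟨t, ⟨ht.1, le_refl t⟩, rfl⟩)
  have hxabs : ∀ t ∈ Set.Icc (0:ℝ) T, |x t| ≤ 2 * M := by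
    intro t ht
    rw [hx t]
    have h1 := abs_add_le (z t) (y t)
    have h2 : |y t| = y t := abs_of_nonneg (hy0 t ht)
    have := hMub t ht
    have := hyub t ht
    linarith
  have hsup1 : sSup ((fun t => |x t|) '' Set.Icc 0 T) ≤ 2 * M := by
    apply Real.sSup_le _ (by linarith)
    rintro b ⟨u, hu, rfl⟩
    exact hxabs u hu
  have hsup2 : sSup {r : ℝ | ∃ s t : ℝ, 0 ≤ s ∧ s < t ∧ t ≤ T ∧ r = |x t - x s| / (t - s) ^ (1-α)} ≤ 2 * R := by
    apply Real.sSup_le _ (by linarith)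
    rintro r ⟨s, t, hs0, hst, htT, rfl⟩
    have hpos : (0:ℝ) < (t - s) ^ (1-α) := Real.rpow_pos_of_pos (by linarith) _
    rw [div_le_iff₀ hpos]
    have := main R hR0 hzR s ⟨hs0, by linarith⟩ t ⟨by linarith, htT⟩
    rwa [abs_of_nonneg (by linarith : (0:ℝ) ≤ t - s)] at this
  -- conclude
  have hNz : holderNorm (1 - α) T z = M + R := rfl
  have hNx : holderNorm (1 - α) T x =
      sSup ((fun t => |x t|) '' Set.Icc 0 T) +
      sSup {r : ℝ | ∃ s t : ℝ, 0 ≤ s ∧ s < t ∧ t ≤ T ∧ r = |x t - x s| / (t - s) ^ (1-α)} := rfl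
  rw [hNz, hNx]
  linarith
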